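/- Let n, m be positive integers, let Θ be a Hermitian 2n×2n complex matrix, M a Hermitian 2n×2n complex matrix, and N a 2m×2n complex matrix. Define A = −iΘM − (1/2)ΘN†J_m N, B = −ΘN†J_m, and C = N. Then AΘ + ΘA† + B J_m B† = 0 and B = −ΘC†J_m. -/
import Mathlib


open Matrix

/-- The matrix `J_k = diag(I_k, -I_k)`. -/
noncomputable def Jmat (k : ℕ) : Matrix (Fin k ⊕ Fin k) (Fin k ⊕ Fin k) ℂ :=
  fromBlocks 1 0 0 (-1)

lemma Jmat_herm (k : ℕ) : (Jmat k)ᴴ = Jmat k := by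
  simp [Jmat, fromBlocks_conjTranspose]

lemma Jmat_sq (k : ℕ) : Jmat k * Jmat k = 1 := by
  simp [Jmat, fromBlocks_multiply, ← fromBlocks_one]

theorem realizability_constraints_of_hamiltonian_coupling
    (n m : ℕ) (hn : 0 < n) (hm : 0 < m)
    (Θ M : Matrix (Fin n ⊕ Fin n) (Fin n ⊕ Fin n) ℂ)
    (hΘ : Θ.IsHermitian) (hM : M.IsHermitian)
    (N : Matrix (Fin m ⊕ Fin m) (Fin n ⊕ Fin n) ℂ)
    (A : Matrix (Fin n ⊕ Fin n) (Fin n ⊕ Fin n) ℂ)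
    (B : Matrix (Fin n ⊕ Fin n) (Fin m ⊕ Fin m) ℂ)
    (C : Matrix (Fin m ⊕ Fin m) (Fin n ⊕ Fin n) ℂ)
    (hA : A = (-Complex.I) • (Θ * M) - (1 / 2 : ℂ) • (Θ * Nᴴ * Jmat m * N))
    (hB : B = -(Θ * Nᴴ * Jmat m))
    (hC : C = N) :
    A * Θ + Θ * Aᴴ + B * Jmat m * Bᴴ = 0 ∧ B = -(Θ * Cᴴ * Jmat m) := by
  subst hA hB hC
  refine ⟨?_, rfl⟩
  have hJ := Jmat_herm m
  have hJ2 := Jmat_sq m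
  simp only [conjTranspose_sub, conjTranspose_smul, conjTranspose_neg, conjTranspose_mul,
    hJ, hΘ.eq, hM.eq, Complex.star_def, map_neg, Complex.conj_I, map_div₀, _root_.map_one, Complex.conj_ofNat, conjTranspose_conjTranspose]
  have h3 : Jmat m * (Jmat m * (C * Θ)) = C * Θ := by
    rw [← Matrix.mul_assoc, hJ2, Matrix.one_mul]
  have key : -(Θ * Cᴴ * Jmat m) * Jmat m * -(Jmat m * (C * Θ))
      = Θ * Cᴴ * Jmat m * (C * Θ) := by
    simp only [Matrix.neg_mul, Matrix.mul_neg, neg_neg]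
    rw [Matrix.mul_assoc (Θ * Cᴴ * Jmat m), h3]
  rw [key]
  simp only [Matrix.mul_sub, Matrix.sub_mul, Matrix.mul_smul, Matrix.smul_mul,
    Matrix.mul_assoc]
  module
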